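/- Normalization for NF: every natural deduction derivation of A from assumptions Γ in the natural deduction system NF for Corsi's logic F can be effectively transformed into a normal derivation of A from Γ, i.e., one in which every major premise of an elimination rule is either an assumption or the conclusion of an elimination rule different from ∨E. -/

import Mathlib

/-- Formulas of subintuitionistic propositional logic. -/
inductive Fml : Type
  | atom : ℕ → Fml
  | bot  : Fml
  | and  : Fml → Fml → Fml
  | or   : Fml → Fml → Fml
  | imp  : Fml → Fml → Fml
deriving DecidableEq

/-- `A ↔ B` abbreviates `(A → B) ∧ (B → A)`. -/
def Fml.biimp (A B : Fml) : Fml := (A.imp B).and (B.imp A)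

/-- The extra axiom schemes / rules among I, C, D, Ĉ, D̂, N, N₂. -/
inductive ExtAx : Type
  | I | C | D | Chat | Dhat | N | N2
deriving DecidableEq

/-- Theorems of the Hilbert system WF extended with the schemes/rules in `E`
(derivations with no assumptions; all rules unrestricted here). -/
inductive HThm (E : Set ExtAx) : Fml → Prop
  | ax1 (A B : Fml)   : HThm E (A.imp (A.or B))
  | ax2 (A B : Fml)   : HThm E (B.imp (A.or B))
  | ax3 (A B : Fml)   : HThm E ((A.and B).imp A)
  | ax4 (A B : Fml)   : HThm E ((A.and B).imp B)
  | ax7 (A B C : Fml) : HThm E ((A.and (B.or C)).imp ((A.and B).or (A.and C)))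
  | ax8 (A : Fml)     : HThm E (A.imp A)
  | ax14 (A : Fml)    : HThm E (Fml.bot.imp A)
  | mp {A B : Fml}    : HThm E A → HThm E (A.imp B) → HThm E B
  | af {A : Fml} (B : Fml) : HThm E A → HThm E (B.imp A)
  | tr {A B C : Fml}  : HThm E (A.imp B) → HThm E (B.imp C) → HThm E (A.imp C)
  | rc {A B C : Fml}  : HThm E (A.imp B) → HThm E (A.imp C) → HThm E (A.imp (B.and C))
  | rd {A B C : Fml}  : HThm E (A.imp C) → HThm E (B.imp C) → HThm E ((A.or B).imp C)
  | conj {A B : Fml}  : HThm E A → HThm E B → HThm E (A.and B)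
  | re {A B C D : Fml} : HThm E (A.biimp B) → HThm E (C.biimp D) →
      HThm E ((A.imp C).biimp (B.imp D))
  | axI (A B C : Fml) : ExtAx.I ∈ E →
      HThm E (((A.imp B).and (B.imp C)).imp (A.imp C))
  | axC (A B C : Fml) : ExtAx.C ∈ E →
      HThm E (((A.imp B).and (A.imp C)).imp (A.imp (B.and C)))
  | axD (A B C : Fml) : ExtAx.D ∈ E →
      HThm E (((A.imp C).and (B.imp C)).imp ((A.or B).imp C))
  | axChat (A B C : Fml) : ExtAx.Chat ∈ E →
      HThm E ((A.imp (B.and C)).imp ((A.imp B).and (A.imp C)))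
  | axDhat (A B C : Fml) : ExtAx.Dhat ∈ E →
      HThm E (((A.or B).imp C).imp ((A.imp C).and (B.imp C)))
  | ruleN {A B C D : Fml} : ExtAx.N ∈ E →
      HThm E (A.imp (B.or C)) → HThm E (C.imp (A.or D)) →
      HThm E ((A.and D).imp B) → HThm E ((C.and B).imp D) →
      HThm E ((A.imp B).biimp (C.imp D))
  | ruleN2 {A B C D : Fml} : ExtAx.N2 ∈ E →
      HThm E (C.imp (A.or D)) → HThm E ((C.and B).imp D) →
      HThm E ((A.imp B).imp (C.imp D))

/-- Restricted derivability from assumptions in the Hilbert system WF + `E`: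
besides assumptions and theorems, only the conjunction rule is unrestricted, and
modus ponens may be used only when the major premise `A → B` is a theorem
(derived with no assumptions); all other rules are confined to theorems. -/
inductive HDer (E : Set ExtAx) (Γ : Set Fml) : Fml → Prop
  | hyp {A : Fml}  : A ∈ Γ → HDer E Γ A
  | thm {A : Fml}  : HThm E A → HDer E Γ A
  | conj {A B : Fml} : HDer E Γ A → HDer E Γ B → HDer E Γ (A.and B)
  | mp {A B : Fml} : HDer E Γ A → HThm E (A.imp B) → HDer E Γ B

/-- Tags for the optional implication-introduction rules of the natural
deduction systems. -/
inductive NRule : Type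
  | impI1 | impI2 | impN | impN2 | impChat | impDhat | impAnd | impOr | impTr
deriving DecidableEq

/-- Natural deduction derivations for the system with optional rules `R`.
`Deriv R Γ A` is a derivation of `A` all of whose open assumptions lie in `Γ`. -/
inductive Deriv (R : Set NRule) : Set Fml → Fml → Type
  | hyp (Γ : Set Fml) (A : Fml) : A ∈ Γ → Deriv R Γ A
  | andI {Γ : Set Fml} {A B : Fml} :
      Deriv R Γ A → Deriv R Γ B → Deriv R Γ (A.and B)
  | andE1 {Γ : Set Fml} {A B : Fml} :
      Deriv R Γ (A.and B) → Deriv R Γ A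
  | andE2 {Γ : Set Fml} {A B : Fml} :
      Deriv R Γ (A.and B) → Deriv R Γ B
  | orI1 {Γ : Set Fml} {A : Fml} (B : Fml) :
      Deriv R Γ A → Deriv R Γ (A.or B)
  | orI2 {Γ : Set Fml} (A : Fml) {B : Fml} :
      Deriv R Γ B → Deriv R Γ (A.or B)
  | orE {Γ : Set Fml} {A B C : Fml} :
      Deriv R Γ (A.or B) → Deriv R (insert A Γ) C → Deriv R (insert B Γ) C →
      Deriv R Γ C
  | botE {Γ : Set Fml} (A : Fml) :
      Deriv R Γ Fml.bot → Deriv R Γ A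
  | impI {Γ : Set Fml} {A B : Fml} :
      Deriv R {A} B → Deriv R Γ (A.imp B)
  | impE {Γ : Set Fml} {A B : Fml} :
      Deriv R Γ A → Deriv R (∅ : Set Fml) (A.imp B) → Deriv R Γ B
  | impI1 {Γ : Set Fml} {A B D : Fml} :
      NRule.impI1 ∈ R → Deriv R {B} D → Deriv R {D} B →
      Deriv R Γ ((A.imp B).imp (A.imp D))
  | impI2 {Γ : Set Fml} {A B D : Fml} :
      NRule.impI2 ∈ R → Deriv R {B} D → Deriv R {D} B →
      Deriv R Γ ((B.imp A).imp (D.imp A))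
  | impIN {Γ : Set Fml} {A B C D : Fml} :
      NRule.impN ∈ R →
      Deriv R {A} (C.or B) → Deriv R {D} B → Deriv R {C} (A.or D) → Deriv R {B} D →
      Deriv R Γ ((A.imp B).imp (C.imp D))
  | impIN2 {Γ : Set Fml} {A B C D : Fml} :
      NRule.impN2 ∈ R →
      Deriv R {C} (A.or D) → Deriv R {B} D →
      Deriv R Γ ((A.imp B).imp (C.imp D))
  | impIChat {Γ : Set Fml} {A B : Fml} (C : Fml) :
      NRule.impChat ∈ R → Deriv R {A} B →
      Deriv R Γ ((C.imp A).imp (C.imp B))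
  | impIDhat {Γ : Set Fml} {A B : Fml} (C : Fml) :
      NRule.impDhat ∈ R → Deriv R {A} B →
      Deriv R Γ ((B.imp C).imp (A.imp C))
  | impIAnd {Γ : Set Fml} {A B C : Fml} :
      NRule.impAnd ∈ R → Deriv R Γ (A.imp B) → Deriv R Γ (A.imp C) →
      Deriv R Γ (A.imp (B.and C))
  | impIOr {Γ : Set Fml} {A B C : Fml} :
      NRule.impOr ∈ R → Deriv R Γ (A.imp C) → Deriv R Γ (B.imp C) →
      Deriv R Γ ((A.or B).imp C)
  | impITr {Γ : Set Fml} {A B C : Fml} :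
      NRule.impTr ∈ R → Deriv R Γ (A.imp B) → Deriv R Γ (B.imp C) →
      Deriv R Γ (A.imp C)

/-- `Γ ⊢ A` in the natural deduction system with optional rules `R`. -/
def NDer (R : Set NRule) (Γ : Set Fml) (A : Fml) : Prop :=
  Nonempty (Deriv R Γ A)

/-- A derivation may serve as the major premise of an elimination rule in a
normal derivation: it is an assumption or ends with an elimination rule
different from ∨E (i.e. ∧E or →E). -/
def Deriv.MajorOK : ∀ {R : Set NRule} {Γ : Set Fml} {A : Fml}, Deriv R Γ A → Prop
  | _, _, _, .hyp _ _ _ => True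
  | _, _, _, .andE1 _   => True
  | _, _, _, .andE2 _   => True
  | _, _, _, .impE _ _  => True
  | _, _, _, _          => False

/-- A derivation is normal if every major premise of an elimination rule is
either an assumption or the conclusion of an elimination rule different
from ∨E. -/
def Deriv.Normal {R : Set NRule} : ∀ {Γ : Set Fml} {A : Fml}, Deriv R Γ A → Prop
  | _, _, .hyp _ _ _ => True
  | _, _, .andI d e => d.Normal ∧ e.Normal
  | _, _, .andE1 d => d.MajorOK ∧ d.Normal
  | _, _, .andE2 d => d.MajorOK ∧ d.Normal
  | _, _, .orI1 _ d => d.Normal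
  | _, _, .orI2 _ d => d.Normal
  | _, _, .orE d e f => d.MajorOK ∧ d.Normal ∧ e.Normal ∧ f.Normal
  | _, _, .botE _ d => d.Normal
  | _, _, .impI d => d.Normal
  | _, _, .impE d e => e.MajorOK ∧ d.Normal ∧ e.Normal
  | _, _, .impI1 _ d e => d.Normal ∧ e.Normal
  | _, _, .impI2 _ d e => d.Normal ∧ e.Normal
  | _, _, .impIN _ d e f g => d.Normal ∧ e.Normal ∧ f.Normal ∧ g.Normal
  | _, _, .impIN2 _ d e => d.Normal ∧ e.Normal
  | _, _, .impIChat _ _ d => d.Normal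
  | _, _, .impIDhat _ _ d => d.Normal
  | _, _, .impIAnd _ d e => d.Normal ∧ e.Normal
  | _, _, .impIOr _ d e => d.Normal ∧ e.Normal
  | _, _, .impITr _ d e => d.Normal ∧ e.Normal


section Normalization

/-- The fixed rule set for NF. -/
def RNF : Set NRule := {NRule.impTr, NRule.impAnd, NRule.impOr}

lemma mem_tr : NRule.impTr ∈ RNF := Or.inl rfl
lemma mem_and : NRule.impAnd ∈ RNF := Or.inr (Or.inl rfl)
lemma mem_or : NRule.impOr ∈ RNF := Or.inr (Or.inr rfl)

/-- Size of a formula, for the cut-elimination induction. -/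
def Fml.size : Fml → ℕ
  | .atom _ => 1
  | .bot => 1
  | .and a b => a.size + b.size + 1
  | .or a b => a.size + b.size + 1
  | .imp a b => a.size + b.size + 1

/-- Neutral (elimination-spine) derivability. -/
inductive Neu (Γ : Set Fml) : Fml → Prop
  | hyp {A : Fml} : A ∈ Γ → Neu Γ A
  | andE1 {A B : Fml} : Neu Γ (A.and B) → Neu Γ A
  | andE2 {A B : Fml} : Neu Γ (A.and B) → Neu Γ B

/-- Normal-form derivability. -/
inductive Nf : Set Fml → Fml → Prop
  | ne {Γ : Set Fml} {A : Fml} : Neu Γ A → Nf Γ A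
  | andI {Γ : Set Fml} {A B : Fml} : Nf Γ A → Nf Γ B → Nf Γ (A.and B)
  | orI1 {Γ : Set Fml} {A : Fml} (B : Fml) : Nf Γ A → Nf Γ (A.or B)
  | orI2 {Γ : Set Fml} {B : Fml} (A : Fml) : Nf Γ B → Nf Γ (A.or B)
  | orE {Γ : Set Fml} {A B C : Fml} : Neu Γ (A.or B) → Nf (insert A Γ) C →
      Nf (insert B Γ) C → Nf Γ C
  | botE {Γ : Set Fml} (A : Fml) : Nf Γ Fml.bot → Nf Γ A
  | impI {Γ : Set Fml} {A B : Fml} : Nf {A} B → Nf Γ (A.imp B)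
  | impIAnd {Γ : Set Fml} {A B C : Fml} : Nf Γ (A.imp B) → Nf Γ (A.imp C) →
      Nf Γ (A.imp (B.and C))
  | impIOr {Γ : Set Fml} {A B C : Fml} : Nf Γ (A.imp C) → Nf Γ (B.imp C) →
      Nf Γ ((A.or B).imp C)
  | impITr {Γ : Set Fml} {A B C : Fml} : Nf Γ (A.imp B) → Nf Γ (B.imp C) →
      Nf Γ (A.imp C)

lemma Neu.mono {Γ Δ : Set Fml} {A : Fml} (h : Neu Γ A) (hs : Γ ⊆ Δ) :
    Neu Δ A := by
  induction h with
  | hyp h => exact Neu.hyp (hs h)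
  | andE1 _ ih => exact Neu.andE1 ih
  | andE2 _ ih => exact Neu.andE2 ih

lemma Nf.mono {Γ : Set Fml} {A : Fml} (h : Nf Γ A) :
    ∀ {Δ : Set Fml}, Γ ⊆ Δ → Nf Δ A := by
  induction h with
  | ne h =>
      intro Δ hs
      exact Nf.ne (h.mono hs)
  | andI _ _ iha ihb =>
      intro Δ hs
      exact Nf.andI (iha hs) (ihb hs)
  | orI1 B _ ih =>
      intro Δ hs
      exact Nf.orI1 B (ih hs)
  | orI2 A _ ih =>
      intro Δ hs
      exact Nf.orI2 A (ih hs)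
  | orE sp _ _ ihl ihr =>
      intro Δ hs
      exact Nf.orE (sp.mono hs) (ihl (Set.insert_subset_insert hs))
        (ihr (Set.insert_subset_insert hs))
  | botE A _ ih =>
      intro Δ hs
      exact Nf.botE A (ih hs)
  | impI d =>
      intro Δ _
      exact Nf.impI d
  | impIAnd _ _ iha ihb =>
      intro Δ hs
      exact Nf.impIAnd (iha hs) (ihb hs)
  | impIOr _ _ iha ihb =>
      intro Δ hs
      exact Nf.impIOr (iha hs) (ihb hs)
  | impITr _ _ iha ihb =>
      intro Δ hs
      exact Nf.impITr (iha hs) (ihb hs)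

lemma Neu.empty {A : Fml} (h : Neu (∅ : Set Fml) A) : False := by
  induction h with
  | hyp h => exact h
  | andE1 _ ih => exact ih
  | andE2 _ ih => exact ih

/-- Projections out of a normal derivation of a conjunction. -/
lemma Nf.projAux {Γ : Set Fml} {D : Fml} (h : Nf Γ D) :
    ∀ A B : Fml, D = A.and B → Nf Γ A ∧ Nf Γ B := by
  induction h with
  | ne sp =>
      rintro A B rfl
      exact ⟨Nf.ne sp.andE1, Nf.ne sp.andE2⟩
  | andI a b =>
      rintro A B hEq
      cases hEq
      exact ⟨a, b⟩
  | orI1 _ _ => intro A B h; exact Fml.noConfusion h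
  | orI2 _ _ => intro A B h; exact Fml.noConfusion h
  | orE sp _ _ ihl ihr =>
      rintro A B rfl
      exact ⟨Nf.orE sp (ihl A B rfl).1 (ihr A B rfl).1,
             Nf.orE sp (ihl A B rfl).2 (ihr A B rfl).2⟩
  | botE _ d =>
      rintro A B rfl
      exact ⟨Nf.botE A d, Nf.botE B d⟩
  | impI _ => intro A B h; exact Fml.noConfusion h
  | impIAnd _ _ _ _ => intro A B h; exact Fml.noConfusion h
  | impIOr _ _ _ _ => intro A B h; exact Fml.noConfusion h
  | impITr _ _ _ _ => intro A B h; exact Fml.noConfusion h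

lemma Nf.proj1 {Γ : Set Fml} {A B : Fml} (h : Nf Γ (A.and B)) : Nf Γ A :=
  (h.projAux A B rfl).1

lemma Nf.proj2 {Γ : Set Fml} {A B : Fml} (h : Nf Γ (A.and B)) : Nf Γ B :=
  (h.projAux A B rfl).2

/-- `Proj A C`: `C` is reachable from `A` by conjunction projections. -/
inductive Proj (A : Fml) : Fml → Prop
  | refl : Proj A A
  | left {B C : Fml} : Proj A (B.and C) → Proj A B
  | right {B C : Fml} : Proj A (B.and C) → Proj A C

lemma Proj.size_le {A C : Fml} (h : Proj A C) : C.size ≤ A.size := by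
  induction h with
  | refl => exact le_refl _
  | left _ ih => exact le_trans (by simp only [Fml.size]; omega) ih
  | right _ ih => exact le_trans (by simp only [Fml.size]; omega) ih

lemma Proj.nf {A C : Fml} (h : Proj A C) {Γ : Set Fml} (hA : Nf Γ A) :
    Nf Γ C := by
  induction h with
  | refl => exact hA
  | left _ ih => exact ih.proj1
  | right _ ih => exact ih.proj2

lemma Neu.split {A : Fml} {Γ : Set Fml} {C : Fml} (h : Neu (insert A Γ) C) :
    Neu Γ C ∨ Proj A C := by
  induction h with
  | hyp h =>
      rcases h with h | h
      · exact Or.inr (h ▸ Proj.refl)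
      · exact Or.inl (Neu.hyp h)
  | andE1 _ ih =>
      rcases ih with h | h
      · exact Or.inl h.andE1
      · exact Or.inr h.left
  | andE2 _ ih =>
      rcases ih with h | h
      · exact Or.inl h.andE2
      · exact Or.inr h.right

/-- Cut admissibility statement for cut formula `A`. -/
def CutP (A : Fml) : Prop :=
  ∀ Γ C, Nf Γ A → Nf (insert A Γ) C → Nf Γ C

/-- Or-elimination admissibility statement. -/
def OrP (X Y : Fml) : Prop :=
  ∀ Γ C, Nf Γ (X.or Y) → Nf (insert X Γ) C → Nf (insert Y Γ) C → Nf Γ C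

lemma orElimAux (X Y : Fml) (cutX : CutP X) (cutY : CutP Y) {C : Fml} :
    ∀ {Γ : Set Fml} {D : Fml}, Nf Γ D → D = X.or Y →
      Nf (insert X Γ) C → Nf (insert Y Γ) C → Nf Γ C := by
  intro Γ D h
  induction h with
  | ne sp =>
      rintro rfl hl hr
      exact Nf.orE sp hl hr
  | andI _ _ _ _ => intro h; exact Fml.noConfusion h
  | orI1 _ a =>
      intro hEq hl _
      injection hEq with h1 h2
      subst h1
      exact cutX _ C a hl
  | orI2 _ b =>
      intro hEq _ hr
      injection hEq with h1 h2
      subst h2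
      exact cutY _ C b hr
  | orE sp _ _ ihl ihr =>
      rintro rfl hl hr
      refine Nf.orE sp (ihl rfl ?_ ?_) (ihr rfl ?_ ?_)
      · exact hl.mono (Set.insert_subset_insert (Set.subset_insert _ _))
      · exact hr.mono (Set.insert_subset_insert (Set.subset_insert _ _))
      · exact hl.mono (Set.insert_subset_insert (Set.subset_insert _ _))
      · exact hr.mono (Set.insert_subset_insert (Set.subset_insert _ _))
  | botE _ d =>
      rintro rfl _ _
      exact Nf.botE _ d
  | impI _ => intro h; exact Fml.noConfusion h
  | impIAnd _ _ _ _ => intro h; exact Fml.noConfusion h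
  | impIOr _ _ _ _ => intro h; exact Fml.noConfusion h
  | impITr _ _ _ _ => intro h; exact Fml.noConfusion h

lemma cutAux (A : Fml) (orP : ∀ X Y : Fml, Proj A (X.or Y) → OrP X Y) :
    ∀ {Δ : Set Fml} {C : Fml}, Nf Δ C →
      ∀ Γ : Set Fml, Δ = insert A Γ → Nf Γ A → Nf Γ C := by
  intro Δ C h
  induction h with
  | ne sp =>
      rintro Γ rfl hA
      rcases sp.split with h | h
      · exact Nf.ne h
      · exact h.nf hA
  | andI _ _ iha ihb =>
      intro Γ hE hA
      exact Nf.andI (iha Γ hE hA) (ihb Γ hE hA)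
  | orI1 B _ ih =>
      intro Γ hE hA
      exact Nf.orI1 B (ih Γ hE hA)
  | orI2 B _ ih =>
      intro Γ hE hA
      exact Nf.orI2 B (ih Γ hE hA)
  | orE sp l r ihl ihr =>
      rintro Γ rfl hA
      have hl := ihl (insert _ Γ) (Set.insert_comm _ _ _)
        (hA.mono (Set.subset_insert _ _))
      have hr := ihr (insert _ Γ) (Set.insert_comm _ _ _)
        (hA.mono (Set.subset_insert _ _))
      rcases sp.split with h | h
      · exact Nf.orE h hl hr
      · exact orP _ _ h Γ _ (h.nf hA) hl hr
  | botE B _ ih =>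
      intro Γ hE hA
      exact Nf.botE B (ih Γ hE hA)
  | impI d =>
      intro Γ _ _
      exact Nf.impI d
  | impIAnd _ _ iha ihb =>
      intro Γ hE hA
      exact Nf.impIAnd (iha Γ hE hA) (ihb Γ hE hA)
  | impIOr _ _ iha ihb =>
      intro Γ hE hA
      exact Nf.impIOr (iha Γ hE hA) (ihb Γ hE hA)
  | impITr _ _ iha ihb =>
      intro Γ hE hA
      exact Nf.impITr (iha Γ hE hA) (ihb Γ hE hA)

lemma cut_all : ∀ n : ℕ, ∀ A : Fml, A.size ≤ n → CutP A := by
  intro n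
  induction n using Nat.strong_induction_on with
  | _ n ih =>
    intro A hA
    refine fun Γ C ha hc => cutAux A ?_ hc Γ rfl ha
    intro X Y hp
    have hsz := hp.size_le
    have hX : X.size < n := by simp only [Fml.size] at hsz; omega
    have hY : Y.size < n := by simp only [Fml.size] at hsz; omega
    intro Γ' C' hor hl hr
    exact orElimAux X Y (ih _ hX X le_rfl) (ih _ hY Y le_rfl) hor rfl hl hr

lemma Nf.cut {Γ : Set Fml} {A C : Fml} (hA : Nf Γ A)
    (hC : Nf (insert A Γ) C) : Nf Γ C :=
  cut_all A.size A le_rfl Γ C hA hC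

lemma Nf.orElim {Γ : Set Fml} {X Y C : Fml} (h : Nf Γ (X.or Y))
    (hl : Nf (insert X Γ) C) (hr : Nf (insert Y Γ) C) : Nf Γ C :=
  orElimAux X Y (cut_all X.size X le_rfl) (cut_all Y.size Y le_rfl) h rfl hl hr

lemma Nf.mp : ∀ {Δ : Set Fml} {D : Fml}, Nf Δ D → Δ = (∅ : Set Fml) →
    ∀ A B : Fml, D = A.imp B → ∀ Γ : Set Fml, Nf Γ A → Nf Γ B := by
  intro Δ D h
  induction h with
  | ne sp =>
      rintro rfl
      exact absurd sp Neu.empty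
  | andI _ _ _ _ => rintro _ A B h; exact Fml.noConfusion h
  | orI1 _ _ => rintro _ A B h; exact Fml.noConfusion h
  | orI2 _ _ => rintro _ A B h; exact Fml.noConfusion h
  | orE sp _ _ _ _ =>
      rintro rfl
      exact absurd sp Neu.empty
  | botE _ d =>
      rintro rfl A B rfl Γ _
      exact Nf.botE B (d.mono (Set.empty_subset _))
  | impI d =>
      rintro rfl A B hEq Γ hA
      cases hEq
      exact hA.cut (d.mono (fun x hx => Or.inl hx))
  | impIAnd _ _ iha ihb =>
      rintro rfl A B hEq Γ hA
      cases hEq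
      exact Nf.andI (iha rfl _ _ rfl Γ hA) (ihb rfl _ _ rfl Γ hA)
  | impIOr _ _ iha ihb =>
      rintro rfl A B hEq Γ hA
      cases hEq
      refine hA.orElim ?_ ?_
      · exact iha rfl _ _ rfl _ (Nf.ne (Neu.hyp (Set.mem_insert _ _)))
      · exact ihb rfl _ _ rfl _ (Nf.ne (Neu.hyp (Set.mem_insert _ _)))
  | impITr _ _ iha ihb =>
      rintro rfl A B hEq Γ hA
      cases hEq
      exact ihb rfl _ _ rfl Γ (iha rfl _ _ rfl Γ hA)

lemma Deriv.toNf : ∀ {Γ : Set Fml} {A : Fml}, Deriv RNF Γ A → Nf Γ A := by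
  intro Γ A d
  induction d with
  | hyp Γ A h => exact Nf.ne (Neu.hyp h)
  | andI _ _ iha ihb => exact Nf.andI iha ihb
  | andE1 _ ih => exact ih.proj1
  | andE2 _ ih => exact ih.proj2
  | orI1 B _ ih => exact Nf.orI1 B ih
  | orI2 A _ ih => exact Nf.orI2 A ih
  | orE _ _ _ ihm ihl ihr => exact ihm.orElim ihl ihr
  | botE A _ ih => exact Nf.botE A ih
  | impI _ ih => exact Nf.impI ih
  | impE _ _ iha ihe => exact ihe.mp rfl _ _ rfl _ iha
  | impI1 h _ _ => exact absurd h (by rintro (h | h | h) <;> simp_all)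
  | impI2 h _ _ => exact absurd h (by rintro (h | h | h) <;> simp_all)
  | impIN h _ _ _ _ => exact absurd h (by rintro (h | h | h) <;> simp_all)
  | impIN2 h _ _ => exact absurd h (by rintro (h | h | h) <;> simp_all)
  | impIChat C h _ => exact absurd h (by rintro (h | h | h) <;> simp_all)
  | impIDhat C h _ => exact absurd h (by rintro (h | h | h) <;> simp_all)
  | impIAnd _ _ _ iha ihb => exact Nf.impIAnd iha ihb
  | impIOr _ _ _ iha ihb => exact Nf.impIOr iha ihb
  | impITr _ _ _ iha ihb => exact Nf.impITr iha ihb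

lemma Neu.realize {Γ : Set Fml} {A : Fml} (h : Neu Γ A) :
    ∃ d : Deriv RNF Γ A, d.Normal ∧ d.MajorOK := by
  induction h with
  | hyp h =>
      refine ⟨Deriv.hyp _ _ h, ?_, ?_⟩ <;>
        simp only [Deriv.Normal, Deriv.MajorOK]
  | andE1 _ ih =>
      obtain ⟨d, hn, hm⟩ := ih
      refine ⟨d.andE1, ?_, ?_⟩ <;> simp only [Deriv.Normal, Deriv.MajorOK]
      exact ⟨hm, hn⟩
  | andE2 _ ih =>
      obtain ⟨d, hn, hm⟩ := ih
      refine ⟨d.andE2, ?_, ?_⟩ <;> simp only [Deriv.Normal, Deriv.MajorOK]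
      exact ⟨hm, hn⟩

lemma Nf.realize {Γ : Set Fml} {A : Fml} (h : Nf Γ A) :
    ∃ d : Deriv RNF Γ A, d.Normal := by
  induction h with
  | ne sp =>
      obtain ⟨d, hn, _⟩ := sp.realize
      exact ⟨d, hn⟩
  | andI _ _ iha ihb =>
      obtain ⟨da, ha⟩ := iha
      obtain ⟨db, hb⟩ := ihb
      refine ⟨da.andI db, ?_⟩
      simp only [Deriv.Normal]
      exact ⟨ha, hb⟩
  | orI1 B _ ih =>
      obtain ⟨d, hd⟩ := ih
      refine ⟨d.orI1 B, ?_⟩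
      simpa only [Deriv.Normal] using hd
  | orI2 A _ ih =>
      obtain ⟨d, hd⟩ := ih
      refine ⟨d.orI2 A, ?_⟩
      simpa only [Deriv.Normal] using hd
  | orE sp _ _ ihl ihr =>
      obtain ⟨dm, hn, hm⟩ := sp.realize
      obtain ⟨dl, hl⟩ := ihl
      obtain ⟨dr, hr⟩ := ihr
      refine ⟨dm.orE dl dr, ?_⟩
      simp only [Deriv.Normal]
      exact ⟨hm, hn, hl, hr⟩
  | botE A _ ih =>
      obtain ⟨d, hd⟩ := ih
      refine ⟨d.botE A, ?_⟩
      simpa only [Deriv.Normal] using hd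
  | impI _ ih =>
      obtain ⟨d, hd⟩ := ih
      refine ⟨d.impI, ?_⟩
      simpa only [Deriv.Normal] using hd
  | impIAnd _ _ iha ihb =>
      obtain ⟨da, ha⟩ := iha
      obtain ⟨db, hb⟩ := ihb
      refine ⟨Deriv.impIAnd mem_and da db, ?_⟩
      simp only [Deriv.Normal]
      exact ⟨ha, hb⟩
  | impIOr _ _ iha ihb =>
      obtain ⟨da, ha⟩ := iha
      obtain ⟨db, hb⟩ := ihb
      refine ⟨Deriv.impIOr mem_or da db, ?_⟩
      simp only [Deriv.Normal]
      exact ⟨ha, hb⟩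
  | impITr _ _ iha ihb =>
      obtain ⟨da, ha⟩ := iha
      obtain ⟨db, hb⟩ := ihb
      refine ⟨Deriv.impITr mem_tr da db, ?_⟩
      simp only [Deriv.Normal]
      exact ⟨ha, hb⟩

end Normalization

theorem normalization_NF (Γ : Set Fml) (A : Fml)
    (d : Deriv {NRule.impTr, NRule.impAnd, NRule.impOr} Γ A) :
    ∃ d' : Deriv {NRule.impTr, NRule.impAnd, NRule.impOr} Γ A, d'.Normal := by
  exact Deriv.toNf d |>.realize
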